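/- For every real t there exists ε > 0 such that for all real z with |z| < ε one has cos z − t·sin z ≠ 0 and the series ∑_{n=0}^∞ P_n(t)·z^n/n! converges to (sin z + t·cos z)/(cos z − t·sin z). -/

import Mathlib

open Polynomial

/-- The derivative polynomials `P_n`: `P_0 = t`, `P_{n+1} = (1+t²)·P_n'`. -/
noncomputable def polyP : ℕ → Polynomial ℝ
  | 0 => X
  | n + 1 => (1 + X ^ 2) * derivative (polyP n)

lemma analyticAt_rsin (x : ℝ) : AnalyticAt ℝ Real.sin x := by
  have h : Real.sin = fun y : ℝ => Complex.reCLM (Complex.sin (Complex.ofRealCLM y)) := by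
    funext y; simp [Complex.sin_ofReal_re]
  rw [h]
  exact (Complex.reCLM.analyticAt _).comp
    (((Complex.differentiable_sin.analyticAt _).restrictScalars).comp
      (Complex.ofRealCLM.analyticAt x))

lemma analyticAt_rcos (x : ℝ) : AnalyticAt ℝ Real.cos x := by
  have h : Real.cos = fun y : ℝ => Complex.reCLM (Complex.cos (Complex.ofRealCLM y)) := by
    funext y; simp [Complex.cos_ofReal_re]
  rw [h]
  exact (Complex.reCLM.analyticAt _).comp
    (((Complex.differentiable_cos.analyticAt _).restrictScalars).comp
      (Complex.ofRealCLM.analyticAt x))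

lemma analyticAt_rtan {x : ℝ} (hx : Real.cos x ≠ 0) : AnalyticAt ℝ Real.tan x := by
  have h : Real.tan = fun y : ℝ => Real.sin y / Real.cos y := by
    funext y; exact Real.tan_eq_sin_div_cos y
  rw [h]
  exact (analyticAt_rsin x).div (analyticAt_rcos x) hx

lemma iteratedDeriv_tan (n : ℕ) : ∀ x : ℝ, Real.cos x ≠ 0 →
    iteratedDeriv n Real.tan x = (polyP n).eval (Real.tan x) := by
  induction n with
  | zero => intro x _; simp [polyP, iteratedDeriv_zero]
  | succ n ih =>
    intro x hx
    rw [iteratedDeriv_succ]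
    have hopen : IsOpen {y : ℝ | Real.cos y ≠ 0} :=
      isOpen_ne.preimage Real.continuous_cos
    have hev : (fun y => iteratedDeriv n Real.tan y)
        =ᶠ[nhds x] fun y => (polyP n).eval (Real.tan y) := by
      filter_upwards [hopen.mem_nhds hx] with y hy using ih y hy
    rw [hev.deriv_eq]
    have hd : HasDerivAt (fun y => (polyP n).eval (Real.tan y))
        ((derivative (polyP n)).eval (Real.tan x) * (1 / Real.cos x ^ 2)) x :=
      (Polynomial.hasDerivAt (polyP n) (Real.tan x)).comp x (Real.hasDerivAt_tan hx)
    rw [hd.deriv]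
    have h1 : 1 / Real.cos x ^ 2 = 1 + Real.tan x ^ 2 := by
      rw [Real.tan_eq_sin_div_cos, div_pow]
      field_simp
      exact (Real.cos_sq_add_sin_sq x).symm
    show _ = ((1 + X ^ 2) * derivative (polyP n)).eval (Real.tan x)
    simp [h1]
    ring

theorem stmt4 (t : ℝ) :
    ∃ ε > 0, ∀ z : ℝ, |z| < ε →
      Real.cos z - t * Real.sin z ≠ 0 ∧
      HasSum (fun n : ℕ => (polyP n).eval t * z ^ n / n.factorial)
        ((Real.sin z + t * Real.cos z) / (Real.cos z - t * Real.sin z)) := by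
  set x₀ := Real.arctan t with hx₀
  have hcos : Real.cos x₀ ≠ 0 := (Real.cos_arctan_pos t).ne'
  have hsin : Real.sin x₀ = t * Real.cos x₀ := by
    rw [hx₀, Real.sin_arctan, Real.cos_arctan]; ring
  -- tan (x₀ + z) equals the target expression
  have htan : ∀ z : ℝ, Real.tan (x₀ + z)
      = (Real.sin z + t * Real.cos z) / (Real.cos z - t * Real.sin z) := by
    intro z
    rw [Real.tan_eq_sin_div_cos, Real.sin_add, Real.cos_add, hsin]
    rw [show t * Real.cos x₀ * Real.cos z + Real.cos x₀ * Real.sin z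
        = Real.cos x₀ * (Real.sin z + t * Real.cos z) by ring,
      show Real.cos x₀ * Real.cos z - t * Real.cos x₀ * Real.sin z
        = Real.cos x₀ * (Real.cos z - t * Real.sin z) by ring,
      mul_div_mul_left _ _ hcos]
  obtain ⟨p, r, hr⟩ := analyticAt_rtan hcos
  obtain ⟨ε₁, hε₁0, hε₁r⟩ := ENNReal.lt_iff_exists_nnreal_btwn.mp hr.r_pos
  have hg : ∀ᶠ z in nhds (0 : ℝ), Real.cos z - t * Real.sin z ≠ 0 := by
    have hc : ContinuousAt (fun z : ℝ => Real.cos z - t * Real.sin z) 0 :=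
      (Real.continuous_cos.sub (continuous_const.mul Real.continuous_sin)).continuousAt
    apply hc.eventually_ne
    simp
  obtain ⟨δ, hδ0, hδ⟩ := Metric.eventually_nhds_iff.mp hg
  refine ⟨min ε₁ δ, lt_min (by exact_mod_cast hε₁0) hδ0, fun z hz => ?_⟩
  have hzδ : |z| < δ := lt_of_lt_of_le hz (min_le_right _ _)
  have hzε : |z| < ε₁ := lt_of_lt_of_le hz (min_le_left _ _)
  refine ⟨hδ (by simpa [Real.dist_eq] using hzδ), ?_⟩
  have hball : z ∈ Metric.eball (0 : ℝ) r := by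
    rw [Metric.mem_eball, edist_zero_right]
    calc (‖z‖₊ : ENNReal) < (ε₁ : ENNReal) := by
          exact_mod_cast (show ‖z‖₊ < ε₁ by
            rw [← NNReal.coe_lt_coe]; simpa [Real.norm_eq_abs] using hzε)
      _ < r := hε₁r
  have hs := hr.hasSum_iteratedFDeriv hball
  have key : ∀ n : ℕ, (n.factorial : ℝ)⁻¹ • iteratedFDeriv ℝ n Real.tan x₀ (fun _ => z)
      = (polyP n).eval t * z ^ n / n.factorial := by
    intro n
    have h1 : iteratedFDeriv ℝ n Real.tan x₀ (fun _ => z)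
        = z ^ n • iteratedDeriv n Real.tan x₀ := by
      have : (fun _ : Fin n => z) = fun _ : Fin n => z • (1 : ℝ) := by
        funext i; simp
      rw [this, (iteratedFDeriv ℝ n Real.tan x₀).map_smul_univ,
        iteratedDeriv_eq_iteratedFDeriv]
      simp
    rw [h1, iteratedDeriv_tan n x₀ hcos, hx₀, Real.tan_arctan]
    simp [smul_eq_mul]
    ring
  rw [funext key] at hs
  rw [htan z] at hs
  exact hs
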